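/- Let U, A, A′ be n×n matrices over a commutative ring K with A and A′ alternating, and assume det(U) is a nonzerodivisor in K. Let B be the (unique) alternating matrix with A·adj(U) = Uᵀ·B and let B′ be the (unique) alternating matrix with adj(U)·A′ = B′·Uᵀ. Then there exist an element r ∈ K and an n×n matrix C over K such that B·A′ = r·1ₙ + C·Uᵀ and A·B′ = r·1ₙ + Uᵀ·C, where 1ₙ is the n×n identity matrix. -/

import Mathlib

open Matrix

set_option linter.unusedSectionVars false
set_option maxHeartbeats 1000000

namespace Statement3Aux

variable {K : Type*} [CommRing K] {n : ℕ}





lemma one_row (s : Fin n) : (1 : Matrix (Fin n) (Fin n) K) s = Pi.single s 1 := by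
  funext j
  simp [Matrix.one_apply, Pi.single_apply, eq_comm]

lemma updateRow_mul' (X M : Matrix (Fin n) (Fin n) K) (a : Fin n) (v : Fin n → K) :
    (X.updateRow a v) * M = (X * M).updateRow a (v ᵥ* M) := by
  ext i j
  by_cases h : i = a
  · subst h
    simp [Matrix.mul_apply, Matrix.vecMul, dotProduct]
  · simp [Matrix.mul_apply, Matrix.updateRow_ne h]

lemma adj_row_vecMul (M : Matrix (Fin n) (Fin n) K) (i : Fin n) :
    (M.adjugate i) ᵥ* M = M.det • (Pi.single i 1 : Fin n → K) := by
  funext j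
  have h := congrFun (congrFun (Matrix.adjugate_mul M) i) j
  simp only [Matrix.mul_apply, Matrix.smul_apply, Matrix.one_apply, smul_eq_mul] at h
  simp only [Matrix.vecMul, dotProduct, h, Pi.smul_apply, Pi.single_apply, smul_eq_mul]
  simp [eq_comm]

lemma updateRow_comm' (X : Matrix (Fin n) (Fin n) K) {a b : Fin n} (hab : a ≠ b)
    (v w : Fin n → K) :
    (X.updateRow a v).updateRow b w = (X.updateRow b w).updateRow a v := by
  ext i j
  by_cases hb : i = b
  · subst hb
    rw [Matrix.updateRow_self, Matrix.updateRow_ne (Ne.symm hab), Matrix.updateRow_self]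
  · by_cases ha : i = a
    · subst ha
      rw [Matrix.updateRow_ne hb, Matrix.updateRow_self, Matrix.updateRow_self]
    · rw [Matrix.updateRow_ne hb, Matrix.updateRow_ne ha, Matrix.updateRow_ne ha,
        Matrix.updateRow_ne hb]






lemma det_updateRow_finsum (M : Matrix (Fin n) (Fin n) K) (a : Fin n)
    (s : Finset (Fin n)) (f : Fin n → (Fin n → K)) :
    (M.updateRow a (∑ p ∈ s, f p)).det = ∑ p ∈ s, (M.updateRow a (f p)).det := by
  induction s using Finset.induction with
  | empty =>
    simp only [Finset.sum_empty]
    exact Matrix.det_eq_zero_of_row_eq_zero a (by simp)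
  | insert _ _ h ih =>
    rw [Finset.sum_insert h, Matrix.det_updateRow_add, ih, Finset.sum_insert h]

lemma det_updateRow_expand (M : Matrix (Fin n) (Fin n) K) (a : Fin n) (v : Fin n → K) :
    (M.updateRow a v).det = ∑ p, v p * (M.updateRow a (Pi.single p 1)).det := by
  have hv : v = ∑ p, v p • (Pi.single p 1 : Fin n → K) := by
    funext j
    simp [Pi.single_apply]
  calc (M.updateRow a v).det = (M.updateRow a (∑ p, v p • (Pi.single p 1 : Fin n → K))).det := by
        rw [← hv]
    _ = ∑ p, (M.updateRow a (v p • (Pi.single p 1 : Fin n → K))).det :=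
        det_updateRow_finsum M a Finset.univ _
    _ = ∑ p, v p * (M.updateRow a (Pi.single p 1)).det := by
        refine Finset.sum_congr rfl fun p _ => ?_
        rw [Matrix.det_updateRow_smul]

lemma sum_collapse3 {f : Fin n → K} {a b c : Fin n} (hab : a ≠ b) (hac : a ≠ c) (hbc : b ≠ c)
    (h0 : ∀ q, q ≠ a → q ≠ b → q ≠ c → f q = 0) : ∑ q, f q = f a + f b + f c := by
  have hsub : ({a, b, c} : Finset (Fin n)) ⊆ Finset.univ := Finset.subset_univ _
  rw [← Finset.sum_subset hsub (fun x _ hx => by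
    simp only [Finset.mem_insert, Finset.mem_singleton, not_or] at hx
    exact h0 x hx.1 hx.2.1 hx.2.2)]
  rw [Finset.sum_insert (by simp [hab, hac]), Finset.sum_insert (by simp [hbc]),
    Finset.sum_singleton, add_assoc]

lemma sum_collapse2 {f : Fin n → K} {a b : Fin n} (hab : a ≠ b)
    (h0 : ∀ q, q ≠ a → q ≠ b → f q = 0) : ∑ q, f q = f a + f b := by
  have hsub : ({a, b} : Finset (Fin n)) ⊆ Finset.univ := Finset.subset_univ _
  rw [← Finset.sum_subset hsub (fun x _ hx => by
    simp only [Finset.mem_insert, Finset.mem_singleton, not_or] at hx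
    exact h0 x hx.1 hx.2)]
  rw [Finset.sum_insert (by simp [hab]), Finset.sum_singleton]


/-- determinant of the identity with one replaced row -/
lemma det_one_up1 (a : Fin n) (v : Fin n → K) :
    ((1 : Matrix (Fin n) (Fin n) K).updateRow a v).det = v a := by
  rw [det_updateRow_expand]
  rw [Finset.sum_eq_single a]
  · rw [show ((1 : Matrix (Fin n) (Fin n) K).updateRow a (Pi.single a 1)) = 1 by
      rw [← one_row a, Matrix.updateRow_eq_self], Matrix.det_one, mul_one]
  · intro p _ hpa
    have h0 : ((1 : Matrix (Fin n) (Fin n) K).updateRow a (Pi.single p 1)).det = 0 :=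
      Matrix.det_zero_of_row_eq (Ne.symm hpa)
        (by rw [Matrix.updateRow_self, Matrix.updateRow_ne hpa, one_row p])
    rw [h0, mul_zero]
  · simp

/-- row-swap determinant computation -/
lemma det_swap_rows (X : Matrix (Fin n) (Fin n) K) {a b : Fin n} (hab : a ≠ b) :
    X.det = - (X.submatrix (Equiv.swap a b) id).det := by
  have h := Matrix.det_permute (Equiv.swap a b) X
  rw [Equiv.Perm.sign_swap hab] at h
  simp only [Units.val_neg, Units.val_one, Int.cast_neg, Int.cast_one, neg_mul, one_mul] at h
  rw [h, neg_neg]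

lemma det_one_up2 {a b : Fin n} (hab : a ≠ b) (v w : Fin n → K) :
    (((1 : Matrix (Fin n) (Fin n) K).updateRow a v).updateRow b w).det
      = v a * w b - v b * w a := by
  rw [det_updateRow_expand]
  have key : ∀ q : Fin n, q ≠ a → q ≠ b →
      w q * (((1 : Matrix (Fin n) (Fin n) K).updateRow a v).updateRow b (Pi.single q 1)).det = 0 := by
    intro q hqa hqb
    have h0 : (((1 : Matrix (Fin n) (Fin n) K).updateRow a v).updateRow b (Pi.single q 1)).det = 0 :=
      Matrix.det_zero_of_row_eq (Ne.symm hqb)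
        (by rw [Matrix.updateRow_self, Matrix.updateRow_ne hqb, Matrix.updateRow_ne hqa, one_row q])
    rw [h0, mul_zero]
  rw [sum_collapse2 hab key]
  have hXa : (((1 : Matrix (Fin n) (Fin n) K).updateRow a v).updateRow b (Pi.single a 1)).det
      = - v b := by
    rw [det_swap_rows _ hab]
    have hY : (((1 : Matrix (Fin n) (Fin n) K).updateRow a v).updateRow b
        (Pi.single a 1)).submatrix (Equiv.swap a b) id
        = (1 : Matrix (Fin n) (Fin n) K).updateRow b v := by
      ext i j
      by_cases hia : i = a
      · subst hia
        simp [Equiv.swap_apply_left, Matrix.updateRow_ne hab, Matrix.updateRow_self,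
          Pi.single_apply, Matrix.one_apply, eq_comm]
      · by_cases hib : i = b
        · subst hib
          simp [Equiv.swap_apply_right, Matrix.updateRow_ne hab, Matrix.updateRow_self]
        · simp [Equiv.swap_apply_of_ne_of_ne hia hib, Matrix.updateRow_ne hia,
            Matrix.updateRow_ne hib]
    rw [hY, det_one_up1]
  have hXb : (((1 : Matrix (Fin n) (Fin n) K).updateRow a v).updateRow b (Pi.single b 1)).det
      = v a := by
    have h1 : (((1 : Matrix (Fin n) (Fin n) K).updateRow a v).updateRow b (Pi.single b 1))
        = (1 : Matrix (Fin n) (Fin n) K).updateRow a v := by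
      have : Pi.single b (1 : K) = ((1 : Matrix (Fin n) (Fin n) K).updateRow a v) b := by
        rw [Matrix.updateRow_ne (Ne.symm hab), one_row b]
      rw [this, Matrix.updateRow_eq_self]
    rw [h1, det_one_up1]
  rw [hXa, hXb]
  ring

lemma det_one_up3 {a b c : Fin n} (hab : a ≠ b) (hac : a ≠ c) (hbc : b ≠ c) (v w z : Fin n → K) :
    ((((1 : Matrix (Fin n) (Fin n) K).updateRow a v).updateRow b w).updateRow c z).det
      = z c * (v a * w b - v b * w a) - z a * (w b * v c - w c * v b)
        - z b * (v a * w c - v c * w a) := by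
  set X1 := ((1 : Matrix (Fin n) (Fin n) K).updateRow a v).updateRow b w with hX1
  rw [det_updateRow_expand]
  have key : ∀ q : Fin n, q ≠ a → q ≠ b → q ≠ c → z q * (X1.updateRow c (Pi.single q 1)).det = 0 := by
    intro q hqa hqb hqc
    have h0 : (X1.updateRow c (Pi.single q 1)).det = 0 :=
      Matrix.det_zero_of_row_eq (Ne.symm hqc)
        (by rw [Matrix.updateRow_self, hX1, Matrix.updateRow_ne hqc,
          Matrix.updateRow_ne hqb, Matrix.updateRow_ne hqa, one_row q])
    rw [h0, mul_zero]
  rw [sum_collapse3 hab hac hbc key]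
  have hc : (X1.updateRow c (Pi.single c 1)).det = v a * w b - v b * w a := by
    have h1 : X1.updateRow c (Pi.single c 1) = X1 := by
      have : Pi.single c (1 : K) = X1 c := by
        rw [hX1, Matrix.updateRow_ne (Ne.symm hbc), Matrix.updateRow_ne (Ne.symm hac), one_row c]
      rw [this, Matrix.updateRow_eq_self]
    rw [h1, hX1, det_one_up2 hab]
  have ha : (X1.updateRow c (Pi.single a 1)).det = - (w b * v c - w c * v b) := by
    rw [det_swap_rows _ hac]
    have hY : (X1.updateRow c (Pi.single a 1)).submatrix (Equiv.swap a c) id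
        = ((1 : Matrix (Fin n) (Fin n) K).updateRow b w).updateRow c v := by
      ext i j
      by_cases hia : i = a
      · subst hia
        simp [Equiv.swap_apply_left, hX1, Matrix.updateRow_self, Matrix.updateRow_ne hab, Matrix.updateRow_ne hac, Matrix.updateRow_ne hbc, Matrix.updateRow_ne (Ne.symm hab), Matrix.updateRow_ne (Ne.symm hac), Matrix.updateRow_ne (Ne.symm hbc), Matrix.updateRow_self,
          Matrix.updateRow_ne hac, Matrix.updateRow_ne hab,
          Pi.single_apply, Matrix.one_apply, eq_comm]
      · by_cases hic : i = c
        · subst hic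
          simp [Equiv.swap_apply_right, hX1, Matrix.updateRow_self, Matrix.updateRow_ne hab, Matrix.updateRow_ne hac, Matrix.updateRow_ne hbc, Matrix.updateRow_ne (Ne.symm hab), Matrix.updateRow_ne (Ne.symm hac), Matrix.updateRow_ne (Ne.symm hbc), Matrix.updateRow_self,
            Matrix.updateRow_ne (Ne.symm hac), Matrix.updateRow_ne (Ne.symm hab),
            Matrix.updateRow_ne hac, Matrix.updateRow_ne hbc]
        · by_cases hib : i = b
          · subst hib
            simp [Equiv.swap_apply_of_ne_of_ne hia hic, hX1, Matrix.updateRow_self, Matrix.updateRow_ne hab, Matrix.updateRow_ne hac, Matrix.updateRow_ne hbc, Matrix.updateRow_ne (Ne.symm hab), Matrix.updateRow_ne (Ne.symm hac), Matrix.updateRow_ne (Ne.symm hbc),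
              Matrix.updateRow_ne hbc, Matrix.updateRow_self,
              Matrix.updateRow_ne (Ne.symm hbc)]
          · simp [Equiv.swap_apply_of_ne_of_ne hia hic, hX1, Matrix.updateRow_self, Matrix.updateRow_ne hab, Matrix.updateRow_ne hac, Matrix.updateRow_ne hbc, Matrix.updateRow_ne (Ne.symm hab), Matrix.updateRow_ne (Ne.symm hac), Matrix.updateRow_ne (Ne.symm hbc),
              Matrix.updateRow_ne hia, Matrix.updateRow_ne hib, Matrix.updateRow_ne hic]
    rw [hY, det_one_up2 hbc]
  have hb : (X1.updateRow c (Pi.single b 1)).det = - (v a * w c - v c * w a) := by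
    rw [det_swap_rows _ hbc]
    have hY : (X1.updateRow c (Pi.single b 1)).submatrix (Equiv.swap b c) id
        = ((1 : Matrix (Fin n) (Fin n) K).updateRow a v).updateRow c w := by
      ext i j
      by_cases hib : i = b
      · subst hib
        simp [Equiv.swap_apply_left, hX1, Matrix.updateRow_self, Matrix.updateRow_ne hab, Matrix.updateRow_ne hac, Matrix.updateRow_ne hbc, Matrix.updateRow_ne (Ne.symm hab), Matrix.updateRow_ne (Ne.symm hac), Matrix.updateRow_ne (Ne.symm hbc), Matrix.updateRow_self,
          Matrix.updateRow_ne hbc, Pi.single_apply, Matrix.one_apply, eq_comm,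
          Matrix.updateRow_ne (Ne.symm hab)]
      · by_cases hic : i = c
        · subst hic
          simp [Equiv.swap_apply_right, hX1, Matrix.updateRow_self, Matrix.updateRow_ne hab, Matrix.updateRow_ne hac, Matrix.updateRow_ne hbc, Matrix.updateRow_ne (Ne.symm hab), Matrix.updateRow_ne (Ne.symm hac), Matrix.updateRow_ne (Ne.symm hbc), Matrix.updateRow_self,
            Matrix.updateRow_ne (Ne.symm hbc), Matrix.updateRow_ne hbc]
        · by_cases hia : i = a
          · subst hia
            simp [Equiv.swap_apply_of_ne_of_ne hib hic, hX1, Matrix.updateRow_self, Matrix.updateRow_ne hab, Matrix.updateRow_ne hac, Matrix.updateRow_ne hbc, Matrix.updateRow_ne (Ne.symm hab), Matrix.updateRow_ne (Ne.symm hac), Matrix.updateRow_ne (Ne.symm hbc),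
              Matrix.updateRow_ne hac, Matrix.updateRow_ne hab, Matrix.updateRow_self]
          · simp [Equiv.swap_apply_of_ne_of_ne hib hic, hX1, Matrix.updateRow_self, Matrix.updateRow_ne hab, Matrix.updateRow_ne hac, Matrix.updateRow_ne hbc, Matrix.updateRow_ne (Ne.symm hab), Matrix.updateRow_ne (Ne.symm hac), Matrix.updateRow_ne (Ne.symm hbc),
              Matrix.updateRow_ne hia, Matrix.updateRow_ne hib, Matrix.updateRow_ne hic]
    rw [hY, det_one_up2 hac]
  rw [ha, hb, hc]
  ring


lemma alt_pair (A : Matrix (Fin n) (Fin n) K) (hskew : ∀ i j, A j i = - A i j)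
    (hdiag : ∀ i, A i i = 0) (F : Fin n → Fin n → K) :
    ∑ x, ∑ y, A x y * F x y
      = ∑ x, ∑ y, (if x < y then A x y * (F x y - F y x) else 0) := by
  have split : ∀ x y : Fin n, A x y * F x y
      = (if x < y then A x y * F x y else 0) + (if y < x then A x y * F x y else 0) := by
    intro x y
    rcases lt_trichotomy x y with h | h | h
    · rw [if_pos h, if_neg (asymm h), add_zero]
    · subst h
      rw [if_neg (lt_irrefl x), hdiag x, zero_mul, add_zero]
    · rw [if_neg (asymm h), if_pos h, zero_add]
  calc ∑ x, ∑ y, A x y * F x y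
      = ∑ x, ∑ y, ((if x < y then A x y * F x y else 0)
          + (if y < x then A x y * F x y else 0)) := by
        exact Finset.sum_congr rfl fun x _ => Finset.sum_congr rfl fun y _ => split x y
    _ = (∑ x, ∑ y, (if x < y then A x y * F x y else 0))
          + ∑ x, ∑ y, (if y < x then A x y * F x y else 0) := by
        rw [← Finset.sum_add_distrib]
        exact Finset.sum_congr rfl fun x _ => by rw [← Finset.sum_add_distrib]
    _ = (∑ x, ∑ y, (if x < y then A x y * F x y else 0))
          + ∑ x, ∑ y, (if x < y then A x y * (- F y x) else 0) := by
        congr 1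
        rw [Finset.sum_comm]
        refine Finset.sum_congr rfl fun x _ => Finset.sum_congr rfl fun y _ => ?_
        by_cases h : x < y
        · rw [if_pos h, if_pos h, hskew x y]
          ring
        · rw [if_neg h, if_neg h]
    _ = ∑ x, ∑ y, (if x < y then A x y * (F x y - F y x) else 0) := by
        rw [← Finset.sum_add_distrib]
        refine Finset.sum_congr rfl fun x _ => ?_
        rw [← Finset.sum_add_distrib]
        refine Finset.sum_congr rfl fun y _ => ?_
        by_cases h : x < y
        · rw [if_pos h, if_pos h, if_pos h]
          ring
        · rw [if_neg h, if_neg h, if_neg h, add_zero]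

/-- second-order "minor": determinant of `M` with rows `a`,`b` replaced by basis rows `i`,`j` -/
def D2 (M : Matrix (Fin n) (Fin n) K) (i j a b : Fin n) : K :=
  if a = b then 0 else ((M.updateRow a (Pi.single i 1)).updateRow b (Pi.single j 1)).det

/-- third-order "minor" -/
def D3 (M : Matrix (Fin n) (Fin n) K) (i j k a b c : Fin n) : K :=
  if a = b ∨ a = c ∨ b = c then 0
  else (((M.updateRow a (Pi.single i 1)).updateRow b (Pi.single j 1)).updateRow c
    (Pi.single k 1)).det

lemma nzd_cancel {d x y : K} (hd : d ∈ nonZeroDivisors K) (h : d * x = d * y) : x = y := by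
  have h2 : (x - y) * d = 0 := by linear_combination h
  have h3 := (mem_nonZeroDivisors_iff.mp hd).2 _ h2
  linear_combination h3

lemma jacobi2 (M : Matrix (Fin n) (Fin n) K) (hd : M.det ∈ nonZeroDivisors K)
    (i j : Fin n) {a b : Fin n} (hab : a ≠ b) :
    M.adjugate i a * M.adjugate j b - M.adjugate i b * M.adjugate j a
      = M.det * D2 M i j a b := by
  have hZM : (((1 : Matrix (Fin n) (Fin n) K).updateRow a (M.adjugate i)).updateRow b
        (M.adjugate j)) * M
      = (M.updateRow a (M.det • (Pi.single i 1 : Fin n → K))).updateRow b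
        (M.det • (Pi.single j 1 : Fin n → K)) := by
    rw [updateRow_mul', updateRow_mul', Matrix.one_mul, adj_row_vecMul, adj_row_vecMul]
  have hdet := congrArg Matrix.det hZM
  rw [Matrix.det_mul, det_one_up2 hab] at hdet
  rw [Matrix.det_updateRow_smul, updateRow_comm' _ hab, Matrix.det_updateRow_smul,
    updateRow_comm' _ (Ne.symm hab)] at hdet
  -- hdet : (adj i a * adj j b - adj i b * adj j a) * det M = det M • (det M • raw)
  rw [D2, if_neg hab]
  apply nzd_cancel hd
  rw [mul_comm M.det _] at hdet ⊢
  rw [hdet]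
  ring

lemma jacobi3L (M : Matrix (Fin n) (Fin n) K) (hd : M.det ∈ nonZeroDivisors K)
    (i j k : Fin n) (a : Fin n) {b c : Fin n} (hbc : b ≠ c) :
    M.adjugate i a * D2 M j k b c - M.adjugate j a * D2 M i k b c
      + M.adjugate k a * D2 M i j b c = M.det * D3 M i j k a b c := by
  have h1 := jacobi2 M hd j k hbc
  have h2 := jacobi2 M hd i k hbc
  have h3 := jacobi2 M hd i j hbc
  by_cases hdist : a = b ∨ a = c
  · -- degenerate case
    rw [D3, if_pos (by tauto)]
    rw [mul_zero]
    apply nzd_cancel hd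
    rw [mul_zero]
    rcases hdist with h | h
    · subst h
      linear_combination - (M.adjugate i a * h1) + M.adjugate j a * h2 - M.adjugate k a * h3
    · subst h
      linear_combination - (M.adjugate i a * h1) + M.adjugate j a * h2 - M.adjugate k a * h3
  · push_neg at hdist
    obtain ⟨hab, hac⟩ := hdist
    -- main case: the Z₃ · M trick
    have hZM : ((((1 : Matrix (Fin n) (Fin n) K).updateRow a (M.adjugate i)).updateRow b
          (M.adjugate j)).updateRow c (M.adjugate k)) * M
        = ((M.updateRow a (M.det • (Pi.single i 1 : Fin n → K))).updateRow b
            (M.det • (Pi.single j 1 : Fin n → K))).updateRow c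
            (M.det • (Pi.single k 1 : Fin n → K)) := by
      rw [updateRow_mul', updateRow_mul', updateRow_mul', Matrix.one_mul,
        adj_row_vecMul, adj_row_vecMul, adj_row_vecMul]
    have hdet := congrArg Matrix.det hZM
    rw [Matrix.det_mul, det_one_up3 hab hac hbc] at hdet
    rw [Matrix.det_updateRow_smul,
      updateRow_comm' _ hbc, Matrix.det_updateRow_smul,
      updateRow_comm' M hac,
      updateRow_comm' (M.updateRow c (Pi.single k 1)) hab, Matrix.det_updateRow_smul,
      updateRow_comm' _ (Ne.symm hab),
      updateRow_comm' M (Ne.symm hac),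
      updateRow_comm' _ (Ne.symm hbc)] at hdet
    -- now hdet : E * det M = det M • (det M • (det M • raw))
    rw [D3, if_neg (by tauto)]
    apply nzd_cancel hd
    apply nzd_cancel hd
    linear_combination hdet - (M.det * M.adjugate i a) * h1 + (M.det * M.adjugate j a) * h2
      - (M.det * M.adjugate k a) * h3

lemma key_identity (U A A' : Matrix (Fin n) (Fin n) K)
    (hA : ∀ i j, A j i = -A i j) (hA0 : ∀ i, A i i = 0)
    (hA' : ∀ i j, A' j i = -A' i j) (hA'0 : ∀ i, A' i i = 0)
    (hd : Uᵀ.det ∈ nonZeroDivisors K) :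
    Uᵀ.adjugate * A * U.adjugate * A' * Uᵀ.adjugate
      = (Uᵀ.det * (- ∑ c, ∑ g, (if c < g then
            ∑ x, ∑ y, (if x < y then A x y * A' c g * D2 Uᵀ c g x y else 0) else 0)))
          • Uᵀ.adjugate
        + (Uᵀ.det * Uᵀ.det) • Matrix.of (fun f h => ∑ c, ∑ g, (if c < g then
            ∑ x, ∑ y, (if x < y then A x y * A' c g * D3 Uᵀ f c g h x y else 0) else 0)) := by
  set H := Uᵀ.adjugate with hH
  set dT := Uᵀ.det with hdT
  have hadjU : U.adjugate = Hᵀ := by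
    rw [hH, Matrix.adjugate_transpose, Matrix.transpose_transpose]
  set SB : Fin n → Fin n → K :=
    fun f c => ∑ x, ∑ y, (if x < y then A x y * D2 Uᵀ f c x y else 0) with hSB
  have stepA : ∀ f c, (H * A * Hᵀ) f c = dT * SB f c := by
    intro f c
    have e1 : (H * A * Hᵀ) f c = ∑ x, ∑ y, A x y * (H f x * H c y) := by
      rw [Matrix.mul_apply]
      simp only [Matrix.mul_apply, Matrix.transpose_apply, Finset.sum_mul]
      rw [Finset.sum_comm]
      exact Finset.sum_congr rfl fun x _ => Finset.sum_congr rfl fun y _ => by ring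
    rw [e1, alt_pair A hA hA0, hSB, Finset.mul_sum]
    refine Finset.sum_congr rfl fun x _ => ?_
    rw [Finset.mul_sum]
    refine Finset.sum_congr rfl fun y _ => ?_
    by_cases hxy : x < y
    · rw [if_pos hxy, if_pos hxy]
      linear_combination (A x y) * (jacobi2 Uᵀ hd f c (ne_of_lt hxy))
    · rw [if_neg hxy, if_neg hxy, mul_zero]
  have stepD : ∀ f h c g, c < g → SB f c * H g h - SB f g * H c h
      = ∑ x, ∑ y, (if x < y then
          A x y * (dT * D3 Uᵀ f c g h x y - D2 Uᵀ c g x y * H f h) else 0) := by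
    intro f h c g _
    rw [hSB]
    simp only [Finset.sum_mul]
    rw [← Finset.sum_sub_distrib]
    refine Finset.sum_congr rfl fun x _ => ?_
    rw [← Finset.sum_sub_distrib]
    refine Finset.sum_congr rfl fun y _ => ?_
    by_cases hxy : x < y
    · rw [if_pos hxy, if_pos hxy, if_pos hxy]
      linear_combination (A x y) * (jacobi3L Uᵀ hd f c g h (ne_of_lt hxy))
    · rw [if_neg hxy, if_neg hxy, if_neg hxy, zero_mul, zero_mul, sub_zero]
  ext f h
  have e2 : (H * A * Hᵀ * A' * H) f h
      = dT * ∑ c, ∑ g, A' c g * (SB f c * H g h) := by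
    calc (H * A * Hᵀ * A' * H) f h
        = ∑ g, (H * A * Hᵀ * A') f g * H g h := by rw [Matrix.mul_apply]
      _ = ∑ g, (∑ c, (H * A * Hᵀ) f c * A' c g) * H g h := by
          refine Finset.sum_congr rfl fun g _ => ?_
          rw [Matrix.mul_apply]
      _ = ∑ g, ∑ c, ((H * A * Hᵀ) f c * A' c g) * H g h := by
          refine Finset.sum_congr rfl fun g _ => ?_
          rw [Finset.sum_mul]
      _ = ∑ c, ∑ g, ((H * A * Hᵀ) f c * A' c g) * H g h := Finset.sum_comm
      _ = ∑ c, ∑ g, dT * (A' c g * (SB f c * H g h)) := by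
          refine Finset.sum_congr rfl fun c _ => Finset.sum_congr rfl fun g _ => ?_
          rw [stepA f c]
          ring
      _ = dT * ∑ c, ∑ g, A' c g * (SB f c * H g h) := by
          rw [Finset.mul_sum]
          exact Finset.sum_congr rfl fun c _ => by rw [Finset.mul_sum]
  rw [hadjU, Matrix.add_apply, Matrix.smul_apply, Matrix.smul_apply, Matrix.of_apply,
    smul_eq_mul, smul_eq_mul, e2, alt_pair A' hA' hA'0]
  have e5 : ∀ c g : Fin n, (if c < g then A' c g * (SB f c * H g h - SB f g * H c h) else 0)
      = dT * (if c < g then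
            ∑ x, ∑ y, (if x < y then A x y * A' c g * D3 Uᵀ f c g h x y else 0) else 0)
        - (if c < g then
            ∑ x, ∑ y, (if x < y then A x y * A' c g * D2 Uᵀ c g x y else 0) else 0) * H f h := by
    intro c g
    by_cases hcg : c < g
    · rw [if_pos hcg, if_pos hcg, if_pos hcg, stepD f h c g hcg]
      rw [Finset.mul_sum, Finset.mul_sum, Finset.sum_mul, ← Finset.sum_sub_distrib]
      refine Finset.sum_congr rfl fun x _ => ?_
      rw [Finset.mul_sum, Finset.mul_sum, Finset.sum_mul, ← Finset.sum_sub_distrib]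
      refine Finset.sum_congr rfl fun y _ => ?_
      by_cases hxy : x < y
      · rw [if_pos hxy, if_pos hxy, if_pos hxy]
        ring
      · rw [if_neg hxy, if_neg hxy, if_neg hxy, mul_zero, mul_zero, zero_mul, sub_zero]
    · rw [if_neg hcg, if_neg hcg, if_neg hcg, mul_zero, zero_mul, sub_zero]
  have e6 : ∑ c, ∑ g, (if c < g then A' c g * (SB f c * H g h - SB f g * H c h) else 0)
      = dT * (∑ c, ∑ g, (if c < g then
            ∑ x, ∑ y, (if x < y then A x y * A' c g * D3 Uᵀ f c g h x y else 0) else 0))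
        - (∑ c, ∑ g, (if c < g then
            ∑ x, ∑ y, (if x < y then A x y * A' c g * D2 Uᵀ c g x y else 0) else 0)) * H f h := by
    calc ∑ c, ∑ g, (if c < g then A' c g * (SB f c * H g h - SB f g * H c h) else 0)
        = ∑ c, ∑ g, (dT * (if c < g then
              ∑ x, ∑ y, (if x < y then A x y * A' c g * D3 Uᵀ f c g h x y else 0) else 0)
            - (if c < g then
              ∑ x, ∑ y, (if x < y then A x y * A' c g * D2 Uᵀ c g x y else 0) else 0) * H f h) :=
          Finset.sum_congr rfl fun c _ => Finset.sum_congr rfl fun g _ => e5 c g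
      _ = _ := by
          rw [Finset.mul_sum, Finset.sum_mul, ← Finset.sum_sub_distrib]
          refine Finset.sum_congr rfl fun c _ => ?_
          rw [Finset.mul_sum, Finset.sum_mul, ← Finset.sum_sub_distrib]
  rw [e6]
  ring

lemma mat_cancel {d : K} (hd : d ∈ nonZeroDivisors K) {X Y : Matrix (Fin n) (Fin n) K}
    (h : d • X = d • Y) : X = Y := by
  ext i j
  have h2 := congrFun (congrFun h i) j
  simp only [Matrix.smul_apply, smul_eq_mul] at h2
  exact nzd_cancel hd h2


end Statement3Aux

open Statement3Aux in

/-- Let `U`, `A`, `A'` be `n × n` matrices over a commutative ring `K` with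
`A` and `A'` alternating, and assume `det U` is a nonzerodivisor in `K`.  Let `B` be the
(unique) alternating matrix with `A * adjugate U = Uᵀ * B` and `B'` the (unique) alternating
matrix with `adjugate U * A' = B' * Uᵀ`.  Then there exist `r ∈ K` and an `n × n` matrix `C`
such that `B * A' = r • 1 + C * Uᵀ` and `A * B' = r • 1 + Uᵀ * C`. -/
theorem statement3 (K : Type*) [CommRing K] (n : ℕ)
    (U A A' B B' : Matrix (Fin n) (Fin n) K)
    (hAalt : Aᵀ = -A ∧ ∀ i, A i i = 0)
    (hA'alt : A'ᵀ = -A' ∧ ∀ i, A' i i = 0)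
    (hdet : U.det ∈ nonZeroDivisors K)
    (hBalt : Bᵀ = -B ∧ ∀ i, B i i = 0)
    (hB : A * U.adjugate = Uᵀ * B)
    (hB'alt : B'ᵀ = -B' ∧ ∀ i, B' i i = 0)
    (hB' : U.adjugate * A' = B' * Uᵀ) :
    ∃ (r : K) (C : Matrix (Fin n) (Fin n) K),
      B * A' = r • (1 : Matrix (Fin n) (Fin n) K) + C * Uᵀ ∧
      A * B' = r • (1 : Matrix (Fin n) (Fin n) K) + Uᵀ * C := by
  have hd' : Uᵀ.det ∈ nonZeroDivisors K := by rwa [Matrix.det_transpose]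
  have hA : ∀ i j, A j i = -A i j := fun i j => by
    have := congrFun (congrFun hAalt.1 i) j
    simpa using this
  have hA' : ∀ i j, A' j i = -A' i j := fun i j => by
    have := congrFun (congrFun hA'alt.1 i) j
    simpa using this
  set H := Uᵀ.adjugate with hH
  set dT := Uᵀ.det with hdT
  set r : K := - ∑ c, ∑ g, (if c < g then
      ∑ x, ∑ y, (if x < y then A x y * A' c g * D2 Uᵀ c g x y else 0) else 0) with hr
  set C : Matrix (Fin n) (Fin n) K := Matrix.of (fun f h => ∑ c, ∑ g, (if c < g then
      ∑ x, ∑ y, (if x < y then A x y * A' c g * D3 Uᵀ f c g h x y else 0) else 0)) with hC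
  -- step 1 : H * A * U.adjugate = dT • B
  have step1 : H * A * U.adjugate = dT • B := by
    rw [Matrix.mul_assoc, hB, ← Matrix.mul_assoc, hH, Matrix.adjugate_mul, ← hdT,
      Matrix.smul_mul, Matrix.one_mul]
  -- step 2 : from the key identity
  have step2 : dT • (B * A' * H) = dT • (r • H + dT • C) := by
    have hk := key_identity U A A' hA hAalt.2 hA' hA'alt.2 hd'
    rw [← hH, ← hdT, ← hr, ← hC] at hk
    calc dT • (B * A' * H) = (dT • B) * A' * H := by
          rw [Matrix.smul_mul, Matrix.smul_mul]
      _ = H * A * U.adjugate * A' * H := by rw [step1]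
      _ = (dT * r) • H + (dT * dT) • C := hk
      _ = dT • (r • H + dT • C) := by rw [smul_add, mul_smul, mul_smul]
  have step2' : B * A' * H = r • H + dT • C := mat_cancel hd' step2
  -- step 3 : multiply by Uᵀ on the right
  have hHU : H * Uᵀ = dT • 1 := by rw [hH, Matrix.adjugate_mul, hdT]
  have step3 : dT • (B * A') = dT • (r • (1 : Matrix (Fin n) (Fin n) K) + C * Uᵀ) := by
    calc dT • (B * A') = B * A' * (dT • 1) := by
          rw [Matrix.mul_smul, Matrix.mul_one]
      _ = B * A' * (H * Uᵀ) := by rw [hHU]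
      _ = (B * A' * H) * Uᵀ := (Matrix.mul_assoc _ _ _).symm
      _ = (r • H + dT • C) * Uᵀ := by rw [step2']
      _ = r • (H * Uᵀ) + dT • (C * Uᵀ) := by
          rw [Matrix.add_mul, Matrix.smul_mul, Matrix.smul_mul]
      _ = dT • (r • (1 : Matrix (Fin n) (Fin n) K) + C * Uᵀ) := by
          rw [hHU, smul_add, smul_comm r dT]
  have goal1 : B * A' = r • (1 : Matrix (Fin n) (Fin n) K) + C * Uᵀ := mat_cancel hd' step3
  -- step 4 : the second identity
  have hUBA : Uᵀ * (B * A') = (A * B') * Uᵀ := by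
    rw [← Matrix.mul_assoc, ← hB, Matrix.mul_assoc, hB', ← Matrix.mul_assoc]
  have hUHd : Uᵀ * H = dT • 1 := by rw [hH, Matrix.mul_adjugate, hdT]
  have step4 : (A * B') * Uᵀ = (r • (1 : Matrix (Fin n) (Fin n) K) + Uᵀ * C) * Uᵀ := by
    rw [← hUBA, goal1, Matrix.mul_add, Matrix.add_mul, Matrix.mul_smul, Matrix.mul_one,
      Matrix.smul_mul, Matrix.one_mul, ← Matrix.mul_assoc]
  have step5 : dT • (A * B') = dT • (r • (1 : Matrix (Fin n) (Fin n) K) + Uᵀ * C) := by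
    calc dT • (A * B') = (A * B') * (dT • 1) := by rw [Matrix.mul_smul, Matrix.mul_one]
      _ = (A * B') * (Uᵀ * H) := by rw [hUHd]
      _ = ((A * B') * Uᵀ) * H := (Matrix.mul_assoc _ _ _).symm
      _ = ((r • (1 : Matrix (Fin n) (Fin n) K) + Uᵀ * C) * Uᵀ) * H := by rw [step4]
      _ = (r • (1 : Matrix (Fin n) (Fin n) K) + Uᵀ * C) * (Uᵀ * H) := by rw [Matrix.mul_assoc]
      _ = dT • (r • (1 : Matrix (Fin n) (Fin n) K) + Uᵀ * C) := by
          rw [hUHd, Matrix.mul_smul, Matrix.mul_one]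
  exact ⟨r, C, goal1, mat_cancel hd' step5⟩
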